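/- Theorem 1 (ROC curve determined by the logistic model on standardized markers). Let U : Ω → [0,1] be a random variable whose conditional distribution given D = 0 is the uniform distribution on [0,1], and let G : [0,1] → ℝ be a measurable function such that E[D | σ(U)] = expit(logit ρ + G(U)) almost surely. Then for every t ∈ [0,1], P(U ≤ t | D = 1) = ∫₀ᵗ exp(G(u)) du; in particular ∫₀¹ exp(G(u)) du = 1. Moreover, if G is continuous, then the case conditional CDF ROC(t) := P(U ≤ t | D = 1) is differentiable on (0,1) with derivative ROC′(t) = exp(G(t)), i.e., G(t) = log ROC′(t). -/

import Mathlib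

open MeasureTheory Real Set

/-- The expit (inverse logit) function. -/
noncomputable def expit (x : ℝ) : ℝ := Real.exp x / (1 + Real.exp x)

/-- The logit function. -/
noncomputable def logit (p : ℝ) : ℝ := Real.log (p / (1 - p))

/-- Theorem 1: under the logistic regression model on the standardized marker `U`
(whose control distribution is uniform on `[0,1]`), the case conditional CDF of `U`
(the ROC curve) equals `∫₀ᵗ exp(G u) du`; in particular `∫₀¹ exp(G u) du = 1`, and if `G`
is continuous the ROC curve is differentiable on `(0,1)` with derivative `exp (G t)`,
i.e. `G t = log ROC'(t)`. -/
theorem roc_determined_by_logistic_model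
    {Ω : Type*} [MeasurableSpace Ω] (μ : Measure Ω) [IsProbabilityMeasure μ]
    (D : Set Ω) (hD : MeasurableSet D)
    (hρ0 : 0 < (μ D).toReal) (hρ1 : (μ D).toReal < 1)
    (U : Ω → ℝ) (hU : Measurable U) (hUrange : ∀ ω, U ω ∈ Icc (0:ℝ) 1)
    (hUnif : ∀ t ∈ Icc (0:ℝ) 1,
      (μ ({ω | U ω ≤ t} ∩ Dᶜ)).toReal = t * (μ Dᶜ).toReal)
    (G : ℝ → ℝ) (hG : Measurable G)
    (hmodel : μ[D.indicator (fun _ => (1:ℝ)) | MeasurableSpace.comap U Real.measurableSpace]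
      =ᵐ[μ] fun ω => expit (logit (μ D).toReal + G (U ω)))
    (ROC : ℝ → ℝ)
    (hROC : ∀ t, ROC t = (μ ({ω | U ω ≤ t} ∩ D)).toReal / (μ D).toReal) :
    (∀ t ∈ Icc (0:ℝ) 1, ROC t = ∫ u in (0:ℝ)..t, Real.exp (G u))
      ∧ (∫ u in (0:ℝ)..(1:ℝ), Real.exp (G u)) = 1
      ∧ (Continuous G → ∀ t ∈ Ioo (0:ℝ) 1,
          HasDerivAt ROC (Real.exp (G t)) t ∧ G t = Real.log (Real.exp (G t))) := by
  set ρ := (μ D).toReal with hρdef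
  have hμD : μ D = ENNReal.ofReal ρ := (ENNReal.ofReal_toReal (measure_ne_top μ D)).symm
  have hρ1' : 0 < 1 - ρ := by linarith
  -- basic facts on expit
  have hexpit_pos : ∀ x, 0 < expit x := fun x => div_pos (exp_pos x) (by positivity)
  have hexpit_lt : ∀ x, expit x < 1 := by
    intro x
    rw [expit, div_lt_one (by positivity)]
    linarith [exp_pos x]
  have hexpit_ratio : ∀ x, expit x = (1 - expit x) * Real.exp x := by
    intro x
    have h0 : (0:ℝ) < 1 + Real.exp x := by positivity
    rw [expit]
    field_simp
    ring
  set f : ℝ → ℝ := fun u => expit (logit ρ + G u) with hfdef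
  have hexpit_cont : Continuous expit := by
    unfold expit
    exact continuous_exp.div (continuous_const.add continuous_exp) (fun x => by positivity)
  have hf_meas : Measurable f :=
    hexpit_cont.measurable.comp (measurable_const.add hG)
  have hf_pos : ∀ u, 0 < f u := fun u => hexpit_pos _
  have hf_lt : ∀ u, f u < 1 := fun u => hexpit_lt _
  have hexp_logit : Real.exp (logit ρ) = ρ / (1 - ρ) := Real.exp_log (by positivity)
  have hf_ratio : ∀ u, f u = (1 - f u) * (ρ * Real.exp (G u) / (1 - ρ)) := by
    intro u
    have h := hexpit_ratio (logit ρ + G u)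
    rw [Real.exp_add, hexp_logit] at h
    have h2 : ρ / (1 - ρ) * Real.exp (G u) = ρ * Real.exp (G u) / (1 - ρ) := by ring
    show f u = (1 - f u) * (ρ * Real.exp (G u) / (1 - ρ))
    rw [hfdef]
    dsimp only
    rw [← h2]
    exact h
  -- conditional expectation step
  have hm : MeasurableSpace.comap U Real.measurableSpace ≤ _ := hU.comap_le
  have hInd : Integrable (D.indicator fun _ => (1:ℝ)) μ := (integrable_const 1).indicator hD
  have hfU_int : Integrable (fun ω => f (U ω)) μ := by
    refine (integrable_const (1:ℝ)).mono' ((hf_meas.comp hU).aestronglyMeasurable) ?_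
    refine ae_of_all _ fun ω => ?_
    rw [Real.norm_eq_abs, abs_of_pos (hf_pos _)]
    exact (hf_lt _).le
  have key1 : ∀ t : ℝ, ∫ ω in {ω | U ω ≤ t}, f (U ω) ∂μ = (μ ({ω | U ω ≤ t} ∩ D)).toReal := by
    intro t
    have hAm : MeasurableSet[MeasurableSpace.comap U Real.measurableSpace] {ω | U ω ≤ t} :=
      ⟨Iic t, measurableSet_Iic, rfl⟩
    have h1 := setIntegral_condExp hm hInd hAm
    have h2 : ∫ ω in {ω | U ω ≤ t},
        (μ[D.indicator (fun _ => (1:ℝ)) | MeasurableSpace.comap U Real.measurableSpace]) ω ∂μ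
        = ∫ ω in {ω | U ω ≤ t}, f (U ω) ∂μ :=
      integral_congr_ae (ae_restrict_of_ae hmodel)
    rw [← h2, h1, setIntegral_indicator hD]
    simp
    rfl
  -- the complementary integral
  have hAfin : ∀ t, μ ({ω | U ω ≤ t} ∩ D) ≠ ⊤ := fun t => measure_ne_top _ _
  have hAmeas : ∀ t : ℝ, MeasurableSet {ω | U ω ≤ t} := fun t => hU measurableSet_Iic
  have key2 : ∀ t : ℝ,
      ∫ ω in {ω | U ω ≤ t}, (1 - f (U ω)) ∂μ = (μ ({ω | U ω ≤ t} ∩ Dᶜ)).toReal := by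
    intro t
    have hsplit : μ ({ω | U ω ≤ t} ∩ D) + μ ({ω | U ω ≤ t} ∩ Dᶜ) = μ {ω | U ω ≤ t} := by
      rw [← diff_eq]
      exact measure_inter_add_diff _ hD
    have htr : (μ {ω | U ω ≤ t}).toReal
        = (μ ({ω | U ω ≤ t} ∩ D)).toReal + (μ ({ω | U ω ≤ t} ∩ Dᶜ)).toReal := by
      rw [← ENNReal.toReal_add (hAfin t) (measure_ne_top _ _), hsplit]
    rw [integral_sub (integrable_const 1).integrableOn hfU_int.integrableOn, key1 t]
    simp only [integral_const, Measure.restrict_apply MeasurableSet.univ, univ_inter,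
      smul_eq_mul, mul_one, measureReal_restrict_apply_univ]
    rw [Measure.real, htr]
    ring
  -- move to the pushforward measure
  set ν : Measure ℝ := μ.map U with hνdef
  have hνprob : IsProbabilityMeasure ν := Measure.isProbabilityMeasure_map hU.aemeasurable
  have keyA : ∀ t : ℝ, μ ({ω | U ω ≤ t} ∩ D)
      = ∫⁻ u in Iic t, ENNReal.ofReal (f u) ∂ν := by
    intro t
    rw [hνdef, setLIntegral_map measurableSet_Iic hf_meas.ennreal_ofReal hU]
    have hpre : U ⁻¹' Iic t = {ω | U ω ≤ t} := rfl
    rw [hpre, ← ofReal_integral_eq_lintegral_ofReal hfU_int.integrableOn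
      (ae_of_all _ fun ω => (hf_pos _).le), key1 t, ENNReal.ofReal_toReal (hAfin t)]
  have keyB : ∀ t : ℝ, μ ({ω | U ω ≤ t} ∩ Dᶜ)
      = ∫⁻ u in Iic t, ENNReal.ofReal (1 - f u) ∂ν := by
    intro t
    have hint : Integrable (fun ω => 1 - f (U ω)) μ := (integrable_const 1).sub hfU_int
    rw [hνdef, setLIntegral_map measurableSet_Iic (show Measurable fun u => 1 - f u from measurable_const.sub hf_meas).ennreal_ofReal hU]
    have hpre : U ⁻¹' Iic t = {ω | U ω ≤ t} := rfl
    rw [hpre, ← ofReal_integral_eq_lintegral_ofReal hint.integrableOn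
      (ae_of_all _ fun ω => sub_nonneg.2 (hf_lt (U ω)).le), key2 t,
      ENNReal.ofReal_toReal (measure_ne_top _ _)]
  -- the control density identity:  ν.withDensity (1 - f) = (1-ρ) • Lebesgue on [0,1]
  have hμDc : μ Dᶜ = ENNReal.ofReal (1 - ρ) := by
    rw [measure_compl hD (measure_ne_top _ _), measure_univ, hμD,
      ENNReal.ofReal_sub _ hρ0.le, ENNReal.ofReal_one]
  have hμDcR : (μ Dᶜ).toReal = 1 - ρ := by
    rw [hμDc, ENNReal.toReal_ofReal hρ1'.le]
  set ν₁ : Measure ℝ := ν.withDensity (fun u => ENNReal.ofReal (1 - f u)) with hν₁def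
  have hν₁Iic : ∀ t : ℝ, ν₁ (Iic t) = μ ({ω | U ω ≤ t} ∩ Dᶜ) := by
    intro t
    rw [hν₁def, withDensity_apply _ measurableSet_Iic, ← keyB t]
  have hν₁fin : IsFiniteMeasure ν₁ := by
    constructor
    rw [hν₁def, withDensity_apply _ MeasurableSet.univ, Measure.restrict_univ]
    calc ∫⁻ u, ENNReal.ofReal (1 - f u) ∂ν ≤ ∫⁻ _, 1 ∂ν := by
          refine lintegral_mono fun u => ?_
          exact ENNReal.ofReal_le_one.2 (by linarith [hf_pos u])
      _ < ⊤ := by simp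
  have hν₁ : ν₁ = (ENNReal.ofReal (1 - ρ)) • (volume.restrict (Icc (0:ℝ) 1)) := by
    refine Measure.ext_of_Iic ν₁ _ (fun t => ?_)
    rw [hν₁Iic t, Measure.smul_apply, Measure.restrict_apply measurableSet_Iic, smul_eq_mul]
    rcases lt_or_ge t 0 with ht | ht
    · have h1 : {ω | U ω ≤ t} = ∅ := by
        ext ω
        simp only [mem_setOf_eq, mem_empty_iff_false, iff_false, not_le]
        exact lt_of_lt_of_le ht (mem_Icc.mp (hUrange ω)).1
      have h2 : Iic t ∩ Icc (0:ℝ) 1 = ∅ := by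
        refine eq_empty_of_forall_notMem fun x hx => ?_
        obtain ⟨hxt, hx01⟩ := hx
        have := (mem_Icc.mp hx01).1
        have := mem_Iic.mp hxt
        linarith
      simp [h1, h2]
    rcases le_or_gt t 1 with ht1 | ht1
    · have h2 : Iic t ∩ Icc (0:ℝ) 1 = Icc 0 t := by
        ext x
        simp only [mem_inter_iff, mem_Iic, mem_Icc]
        constructor
        · rintro ⟨hx, hx0, _⟩; exact ⟨hx0, hx⟩
        · rintro ⟨hx0, hx⟩; exact ⟨hx, hx0, le_trans hx ht1⟩
      have h3 : μ ({ω | U ω ≤ t} ∩ Dᶜ) = ENNReal.ofReal (t * (1 - ρ)) := by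
        rw [← ENNReal.ofReal_toReal (measure_ne_top μ _), hUnif t ⟨ht, ht1⟩, hμDcR]
      rw [h3, h2, Real.volume_Icc, sub_zero, ← ENNReal.ofReal_mul hρ1'.le]
      ring_nf
    · have h1 : {ω | U ω ≤ t} = univ := by
        ext ω
        simp only [mem_setOf_eq, mem_univ, iff_true]
        exact le_trans (mem_Icc.mp (hUrange ω)).2 ht1.le
      have h2 : Iic t ∩ Icc (0:ℝ) 1 = Icc 0 1 := by
        ext x
        simp only [mem_inter_iff, mem_Iic, mem_Icc]
        exact ⟨fun h => h.2, fun h => ⟨le_trans h.2 ht1.le, h⟩⟩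
      rw [h1, univ_inter, hμDc, h2, Real.volume_Icc]
      simp
  -- main computation
  have hexpG_meas : Measurable fun u => ENNReal.ofReal (ρ * Real.exp (G u) / (1 - ρ)) :=
    ((hG.exp.const_mul ρ).div_const (1 - ρ)).ennreal_ofReal
  have keymain : ∀ t ∈ Icc (0:ℝ) 1, μ ({ω | U ω ≤ t} ∩ D)
      = ENNReal.ofReal ρ * ∫⁻ u in Icc (0:ℝ) t, ENNReal.ofReal (Real.exp (G u)) := by
    intro t ht
    rw [keyA t]
    have step1 : ∫⁻ u in Iic t, ENNReal.ofReal (f u) ∂ν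
        = ∫⁻ u in Iic t,
            ENNReal.ofReal (1 - f u) * ENNReal.ofReal (ρ * Real.exp (G u) / (1 - ρ)) ∂ν := by
      refine lintegral_congr fun u => ?_
      rw [← ENNReal.ofReal_mul (by linarith [hf_lt u]), ← hf_ratio u]
    have step2 : ∫⁻ u in Iic t,
          ENNReal.ofReal (1 - f u) * ENNReal.ofReal (ρ * Real.exp (G u) / (1 - ρ)) ∂ν
        = ∫⁻ u in Iic t, ENNReal.ofReal (ρ * Real.exp (G u) / (1 - ρ)) ∂ν₁ := by
      rw [hν₁def, restrict_withDensity measurableSet_Iic,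
        lintegral_withDensity_eq_lintegral_mul _ (show Measurable fun u => 1 - f u from measurable_const.sub hf_meas).ennreal_ofReal
          hexpG_meas]
      rfl
    have hIccIic : Icc (0:ℝ) 1 ∩ Iic t = Icc 0 t := by
      ext x
      simp only [mem_inter_iff, mem_Iic, mem_Icc]
      constructor
      · rintro ⟨⟨hx0, _⟩, hx⟩; exact ⟨hx0, hx⟩
      · rintro ⟨hx0, hx⟩; exact ⟨⟨hx0, le_trans hx ht.2⟩, hx⟩
    have step3 : ∫⁻ u in Iic t, ENNReal.ofReal (ρ * Real.exp (G u) / (1 - ρ)) ∂ν₁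
        = ENNReal.ofReal (1 - ρ)
            * ∫⁻ u in Icc (0:ℝ) t, ENNReal.ofReal (ρ * Real.exp (G u) / (1 - ρ)) := by
      rw [hν₁, Measure.restrict_smul, lintegral_smul_measure,
        Measure.restrict_restrict measurableSet_Iic,
        show Iic t ∩ Icc (0:ℝ) 1 = Icc 0 t from (inter_comm _ _).trans hIccIic, smul_eq_mul]
    rw [step1, step2, step3, ← lintegral_const_mul _ hexpG_meas]
    have hpt : ∀ u : ℝ, ENNReal.ofReal (1 - ρ) * ENNReal.ofReal (ρ * Real.exp (G u) / (1 - ρ))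
        = ENNReal.ofReal ρ * ENNReal.ofReal (Real.exp (G u)) := by
      intro u
      rw [← ENNReal.ofReal_mul hρ1'.le, ← ENNReal.ofReal_mul hρ0.le]
      congr 1
      field_simp
    simp_rw [hpt]
    rw [lintegral_const_mul _ hG.exp.ennreal_ofReal]
  -- value at t = 1
  have h01 : (1:ℝ) ∈ Icc (0:ℝ) 1 := ⟨zero_le_one, le_refl 1⟩
  have huniv1 : {ω | U ω ≤ (1:ℝ)} = univ := by
    ext ω
    simp only [mem_setOf_eq, mem_univ, iff_true]
    exact (mem_Icc.mp (hUrange ω)).2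
  have hρne : ENNReal.ofReal ρ ≠ 0 := by
    rw [ne_eq, ENNReal.ofReal_eq_zero, not_le]
    exact hρ0
  have hL1 : ∫⁻ u in Icc (0:ℝ) 1, ENNReal.ofReal (Real.exp (G u)) = 1 := by
    have h := keymain 1 h01
    rw [huniv1, univ_inter, hμD] at h
    have h' : ENNReal.ofReal ρ * 1
        = ENNReal.ofReal ρ * ∫⁻ u in Icc (0:ℝ) 1, ENNReal.ofReal (Real.exp (G u)) := by
      rw [mul_one]
      exact h
    exact ((ENNReal.mul_right_inj hρne ENNReal.ofReal_ne_top).mp h').symm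
  -- integrability of exp ∘ G on [0,1]
  have hexpG_int : IntegrableOn (fun u => Real.exp (G u)) (Icc (0:ℝ) 1) := by
    refine ⟨hG.exp.aestronglyMeasurable, ?_⟩
    rw [hasFiniteIntegral_iff_ofReal (ae_of_all _ fun u => (exp_pos _).le), hL1]
    exact ENNReal.one_lt_top
  have hIccInt : ∀ t ∈ Icc (0:ℝ) 1, IntegrableOn (fun u => Real.exp (G u)) (Icc (0:ℝ) t) :=
    fun t ht => hexpG_int.mono_set (Icc_subset_Icc_right (mem_Icc.mp ht).2)
  have hlr : ∀ t ∈ Icc (0:ℝ) 1, ∫⁻ u in Icc (0:ℝ) t, ENNReal.ofReal (Real.exp (G u))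
      = ENNReal.ofReal (∫ u in Icc (0:ℝ) t, Real.exp (G u)) := fun t ht =>
    (ofReal_integral_eq_lintegral_ofReal (hIccInt t ht) (ae_of_all _ fun u => (exp_pos _).le)).symm
  have hIccItv : ∀ t ∈ Icc (0:ℝ) 1, ∫ u in Icc (0:ℝ) t, Real.exp (G u)
      = ∫ u in (0:ℝ)..t, Real.exp (G u) := by
    intro t ht
    rw [intervalIntegral.integral_of_le (mem_Icc.mp ht).1, ← integral_Icc_eq_integral_Ioc]
  have part1 : ∀ t ∈ Icc (0:ℝ) 1, ROC t = ∫ u in (0:ℝ)..t, Real.exp (G u) := by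
    intro t ht
    have hpos : 0 ≤ ∫ u in Icc (0:ℝ) t, Real.exp (G u) :=
      setIntegral_nonneg measurableSet_Icc (fun u _ => (exp_pos _).le)
    rw [hROC, keymain t ht, hlr t ht, ← ENNReal.ofReal_mul hρ0.le,
      ENNReal.toReal_ofReal (mul_nonneg hρ0.le hpos), ← hIccItv t ht, mul_comm,
      mul_div_assoc, div_self hρ0.ne', mul_one]
  have part2 : (∫ u in (0:ℝ)..1, Real.exp (G u)) = 1 := by
    have h := hlr 1 h01
    rw [hL1] at h
    have h1 : ∫ u in Icc (0:ℝ) 1, Real.exp (G u) = 1 := ENNReal.ofReal_eq_one.mp h.symm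
    rw [← hIccItv 1 h01, h1]
  refine ⟨part1, part2, ?_⟩
  intro hGc t ht
  refine ⟨?_, (Real.log_exp _).symm⟩
  have hFd : HasDerivAt (fun s => ∫ u in (0:ℝ)..s, Real.exp (G u)) (Real.exp (G t)) t :=
    ((Real.continuous_exp.comp hGc).integral_hasStrictDerivAt 0 t).hasDerivAt
  have heq : ROC =ᶠ[nhds t] fun s => ∫ u in (0:ℝ)..s, Real.exp (G u) := by
    filter_upwards [isOpen_Ioo.mem_nhds ht] with s hs
    exact part1 s ⟨(mem_Ioo.mp hs).1.le, (mem_Ioo.mp hs).2.le⟩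
  exact hFd.congr_of_eventuallyEq heq
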